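/- Let A be a nonzero (unital, associative) ring and G a group. If the group ring A[G] is a centrally essential ring, then G is an FC-group, i.e., every conjugacy class of G is finite. -/

import Mathlib

/-- A ring `R` is *centrally essential* if for every nonzero `r ∈ R` there is a central
element `c` such that `c * r` is a nonzero central element. -/
def IsCentrallyEssential (R : Type*) [Ring R] : Prop :=
  ∀ r : R, r ≠ 0 → ∃ c ∈ Subring.center R, c * r ≠ 0 ∧ c * r ∈ Subring.center R

private lemma conjClass_mul_finite {G : Type*} [Group G] {a b : G}
    (ha : (Set.range fun y : G => y * a * y⁻¹).Finite)
    (hb : (Set.range fun y : G => y * b * y⁻¹).Finite) :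
    (Set.range fun y : G => y * (a * b) * y⁻¹).Finite := by
  apply (ha.image2 (· * ·) hb).subset
  rintro _ ⟨y, rfl⟩
  exact ⟨y * a * y⁻¹, ⟨y, rfl⟩, y * b * y⁻¹, ⟨y, rfl⟩, by group⟩

private lemma conjClass_inv_finite {G : Type*} [Group G] {a : G}
    (ha : (Set.range fun y : G => y * a * y⁻¹).Finite) :
    (Set.range fun y : G => y * a⁻¹ * y⁻¹).Finite := by
  apply (ha.image Inv.inv).subset
  rintro _ ⟨y, rfl⟩
  exact ⟨y * a * y⁻¹, ⟨y, rfl⟩, by group⟩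

private lemma central_conj_apply {A G : Type*} [Ring A] [Group G]
    (z : MonoidAlgebra A G) (hz : z ∈ Subring.center (MonoidAlgebra A G)) (x y : G) :
    z.coeff (y * x * y⁻¹) = z.coeff x := by
  have h := (Subring.mem_center_iff.mp hz) (MonoidAlgebra.single y 1)
  have h2 := congrArg (fun f : MonoidAlgebra A G => f.coeff (y * x)) h
  simpa [MonoidAlgebra.coeff_single_mul_apply, MonoidAlgebra.coeff_mul_single_apply,
    mul_assoc] using h2.symm

private lemma central_conjClass_finite {A G : Type*} [Ring A] [Group G]
    {z : MonoidAlgebra A G} (hz : z ∈ Subring.center (MonoidAlgebra A G)) {x : G}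
    (hx : z.coeff x ≠ 0) : (Set.range fun y : G => y * x * y⁻¹).Finite := by
  apply z.coeff.support.finite_toSet.subset
  rintro _ ⟨y, rfl⟩
  simpa [Finsupp.mem_support_iff, central_conj_apply z hz x y] using hx

theorem fc_group_of_centrally_essential_group_ring
    (A : Type*) [Ring A] [Nontrivial A] (G : Type*) [Group G]
    (h : IsCentrallyEssential (MonoidAlgebra A G)) :
    ∀ g : G, {x : G | ∃ y : G, y * g * y⁻¹ = x}.Finite := by
  intro g
  obtain ⟨c, hc, hne, hz⟩ := h (MonoidAlgebra.single g 1)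
    (by simp [MonoidAlgebra.single_eq_zero])
  set z := c * MonoidAlgebra.single g (1 : A) with hzdef
  obtain ⟨a, ha⟩ : ∃ a, z.coeff a ≠ 0 := by
    by_contra hcon
    push_neg at hcon
    exact hne (MonoidAlgebra.ext (Finsupp.ext fun a => by simpa using hcon a))
  have hza : z.coeff a = c.coeff (a * g⁻¹) := by
    simp [hzdef, MonoidAlgebra.coeff_mul_single_apply]
  have hca : c.coeff (a * g⁻¹) ≠ 0 := hza ▸ ha
  have fa : (Set.range fun y : G => y * a * y⁻¹).Finite :=
    central_conjClass_finite hz ha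
  have fh : (Set.range fun y : G => y * (a * g⁻¹) * y⁻¹).Finite :=
    central_conjClass_finite hc hca
  have key : g = (a * g⁻¹)⁻¹ * a := by group
  have : (Set.range fun y : G => y * ((a * g⁻¹)⁻¹ * a) * y⁻¹).Finite :=
    conjClass_mul_finite (conjClass_inv_finite fh) fa
  rw [show {x : G | ∃ y : G, y * g * y⁻¹ = x}
      = Set.range fun y : G => y * g * y⁻¹ from rfl, key]
  exact this
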